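/- Let (H_n) be a sequence of compact Hausdorff spaces, U := {u ∈ ∏_n C(H_n) : sup_n ‖u_n‖_∞ < ∞} and V := {ν ∈ ∏_n ca_r(H_n) : Σ_n ‖ν_n‖_tv < ∞}, paired by ⟨u,ν⟩ := Σ_n ⟨u_n, ν_n⟩. Then for every y ∈ ℓ¹, the set A_y = {ν ∈ V : ‖ν_n‖_tv ≤ |y_n| for all n} is compact in the weak topology σ(V, U). -/

import Mathlib

open MeasureTheory Filter Topology Set
open scoped ENNReal NNReal

/-- Inner regularity by closed compact sets on all Borel sets ("regular" in the paper). -/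
def PaperRegular {α : Type*} [TopologicalSpace α] [MeasurableSpace α] (μ : Measure α) :
    Prop :=
  ∀ A : Set α, MeasurableSet A →
    μ A = ⨆ B ∈ {B : Set α | MeasurableSet B ∧ IsClosed B ∧ IsCompact B ∧ B ⊆ A}, μ B

/-- A signed Borel measure is regular if both parts of its Jordan decomposition are. -/
def SignedRegular {α : Type*} [TopologicalSpace α] [MeasurableSpace α]
    (ν : SignedMeasure α) : Prop :=
  PaperRegular ν.toJordanDecomposition.posPart ∧ PaperRegular ν.toJordanDecomposition.negPart

variable (H : ℕ → Type*) [∀ n, TopologicalSpace (H n)] [∀ n, CompactSpace (H n)]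
  [∀ n, T2Space (H n)] [∀ n, MeasurableSpace (H n)] [∀ n, BorelSpace (H n)]

/-- U: sequences of continuous functions with uniformly bounded sup-norms. -/
def Useq : Type _ := {u : ∀ n, C(H n, ℝ) // ∃ M : ℝ, ∀ n, ‖u n‖ ≤ M}

/-- V: sequences of regular signed Borel measures with summable total variation norms. -/
def Vseq : Type _ :=
  {ν : ∀ n, SignedMeasure (H n) // (∀ n, SignedRegular (ν n)) ∧
    (∑' n, (ν n).totalVariation Set.univ) < ⊤}

/-- The integral of a function against a signed measure, via the Jordan decomposition. -/
noncomputable def smIntegral {α : Type*} [MeasurableSpace α] (ν : SignedMeasure α)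
    (f : α → ℝ) : ℝ :=
  (∫ x, f x ∂ν.toJordanDecomposition.posPart) - ∫ x, f x ∂ν.toJordanDecomposition.negPart

/-- The pairing ⟨u,ν⟩ = Σ_n ⟨u_n, ν_n⟩ between U and V. -/
noncomputable def pairUV (u : Useq H) (ν : Vseq H) : ℝ :=
  ∑' n, smIntegral (ν.1 n) (u.1 n)

/-- The weak topology σ(V, U) on V. -/
noncomputable def weakTopV : TopologicalSpace (Vseq H) :=
  TopologicalSpace.induced (fun ν : Vseq H => fun u : Useq H => pairUV H u ν)
    Pi.topologicalSpace

namespace S15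
variable {X : Type*} [TopologicalSpace X] [CompactSpace X]

set_option linter.unusedSectionVars false

lemma norm_le_of_le {f g : C(X,ℝ)} (hg : 0 ≤ g) (hgf : g ≤ f) : ‖g‖ ≤ ‖f‖ := by
  refine (g.norm_le (norm_nonneg f)).2 fun x => ?_
  have h1 : (0:ℝ) ≤ g x := hg x
  have h2 : g x ≤ f x := hgf x
  have := f.norm_coe_le_norm x
  rw [Real.norm_eq_abs] at this ⊢
  rw [abs_of_nonneg h1]
  exact h2.trans ((le_abs_self _).trans this)

section pp
variable (φ : C(X,ℝ) → ℝ) (c : ℝ)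

/-- The set of values of φ on {0 ≤ g ≤ f}. -/
def posSet (f : C(X,ℝ)) : Set ℝ := φ '' {g | 0 ≤ g ∧ g ≤ f}

noncomputable def pp (f : C(X,ℝ)) : ℝ := sSup (posSet φ f)

variable {φ c}
variable (hadd : ∀ f g, φ (f+g) = φ f + φ g)
  (hsmul : ∀ (t : ℝ) f, φ (t • f) = t * φ f)
  (hbd : ∀ f, |φ f| ≤ c * ‖f‖) (hc : 0 ≤ c)

include hsmul in
lemma phi_zero : φ 0 = 0 := by simpa using hsmul 0 0

include hsmul in
lemma zero_mem_posSet {f : C(X,ℝ)} (hf : 0 ≤ f) : (0:ℝ) ∈ posSet φ f :=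
  ⟨0, ⟨le_refl _, hf⟩, phi_zero hsmul⟩

include hbd hc in
lemma bddAbove_posSet (f : C(X,ℝ)) : BddAbove (posSet φ f) := by
  refine ⟨c * ‖f‖, fun r hr => ?_⟩
  obtain ⟨g, ⟨hg0, hgf⟩, rfl⟩ := hr
  calc φ g ≤ |φ g| := le_abs_self _
    _ ≤ c * ‖g‖ := hbd g
    _ ≤ c * ‖f‖ := mul_le_mul_of_nonneg_left (norm_le_of_le hg0 hgf) hc

include hsmul hbd hc in
lemma pp_nonneg {f : C(X,ℝ)} (hf : 0 ≤ f) : 0 ≤ pp φ f :=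
  le_csSup (bddAbove_posSet hbd hc f) (zero_mem_posSet hsmul hf)

include hsmul hbd hc in
lemma le_pp {f : C(X,ℝ)} (hf : 0 ≤ f) : φ f ≤ pp φ f :=
  le_csSup (bddAbove_posSet hbd hc f) ⟨f, ⟨hf, le_refl _⟩, rfl⟩

include hsmul hbd hc in
lemma pp_le {f : C(X,ℝ)} (hf : 0 ≤ f) : pp φ f ≤ c * ‖f‖ := by
  refine csSup_le ((posSet φ f).nonempty_of_mem (zero_mem_posSet hsmul hf)) ?_
  rintro r ⟨g, ⟨hg0, hgf⟩, rfl⟩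
  calc φ g ≤ |φ g| := le_abs_self _
    _ ≤ c * ‖g‖ := hbd g
    _ ≤ c * ‖f‖ := mul_le_mul_of_nonneg_left (norm_le_of_le hg0 hgf) hc

include hadd hsmul hbd hc in
lemma pp_add {f₁ f₂ : C(X,ℝ)} (h₁ : 0 ≤ f₁) (h₂ : 0 ≤ f₂) :
    pp φ (f₁ + f₂) = pp φ f₁ + pp φ f₂ := by
  refine le_antisymm ?_ ?_
  · refine csSup_le ((posSet φ (f₁+f₂)).nonempty_of_mem (zero_mem_posSet hsmul (by positivity))) ?_
    rintro r ⟨g, ⟨hg0, hgf⟩, rfl⟩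
    set g₁ : C(X,ℝ) := g ⊓ f₁ with hg₁
    have hg₁0 : 0 ≤ g₁ := fun x => le_min (hg0 x) (h₁ x)
    have hg₁f : g₁ ≤ f₁ := fun x => min_le_right _ _
    have hg₂0 : 0 ≤ g - g₁ := fun x => by
      show (0:C(X,ℝ)) x ≤ (g - g₁) x
      simp only [ContinuousMap.zero_apply, ContinuousMap.sub_apply]
      have hx : g₁ x = min (g x) (f₁ x) := rfl
      rw [hx]; simp [min_le_left]
    have hg₂f : g - g₁ ≤ f₂ := fun x => by
      show (g - g₁) x ≤ f₂ x
      simp only [ContinuousMap.sub_apply]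
      have hx : g₁ x = min (g x) (f₁ x) := rfl
      rw [hx]
      rcases le_total (g x) (f₁ x) with h | h
      · simpa [h] using h₂ x
      · simp only [min_eq_right h]
        have h3 : g x ≤ f₁ x + f₂ x := hgf x
        linarith
    have : φ g = φ g₁ + φ (g - g₁) := by
      rw [← hadd]; congr 1; abel
    rw [this]
    gcongr
    · exact le_csSup (bddAbove_posSet hbd hc f₁) ⟨g₁, ⟨hg₁0, hg₁f⟩, rfl⟩
    · exact le_csSup (bddAbove_posSet hbd hc f₂) ⟨g - g₁, ⟨hg₂0, hg₂f⟩, rfl⟩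
  · rw [← le_sub_iff_add_le]
    refine csSup_le ((posSet φ f₁).nonempty_of_mem (zero_mem_posSet hsmul h₁)) ?_
    rintro r₁ ⟨g₁, ⟨hg₁0, hg₁f⟩, rfl⟩
    rw [le_sub_iff_add_le, add_comm, ← le_sub_iff_add_le]
    refine csSup_le ((posSet φ f₂).nonempty_of_mem (zero_mem_posSet hsmul h₂)) ?_
    rintro r₂ ⟨g₂, ⟨hg₂0, hg₂f⟩, rfl⟩
    rw [le_sub_iff_add_le]
    have hmem : φ (g₁ + g₂) ∈ posSet φ (f₁ + f₂) :=
      ⟨g₁ + g₂, ⟨by positivity, add_le_add hg₁f hg₂f⟩, rfl⟩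
    have hle : φ (g₁ + g₂) ≤ pp φ (f₁ + f₂) := le_csSup (bddAbove_posSet hbd hc (f₁+f₂)) hmem
    rw [hadd] at hle
    linarith

include hadd hsmul hbd hc in
lemma pp_smul {t : ℝ} (ht : 0 ≤ t) {f : C(X,ℝ)} (hf : 0 ≤ f) :
    pp φ (t • f) = t * pp φ f := by
  rcases eq_or_lt_of_le ht with rfl | ht
  · simp only [zero_smul, zero_mul]
    refine le_antisymm ?_ (pp_nonneg hsmul hbd hc (le_refl _))
    refine csSup_le ((posSet φ 0).nonempty_of_mem (zero_mem_posSet hsmul (le_refl _))) ?_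
    rintro r ⟨g, ⟨hg0, hgf⟩, rfl⟩
    have : g = 0 := le_antisymm hgf hg0
    rw [this, phi_zero hsmul]
  · have key : ∀ (s : ℝ), 0 < s → ∀ (f : C(X,ℝ)), 0 ≤ f → pp φ (s • f) ≤ s * pp φ f := by
      intro s hs f hf
      refine csSup_le ((posSet φ (s•f)).nonempty_of_mem
        (zero_mem_posSet hsmul (by intro x; simpa using mul_nonneg hs.le (hf x)))) ?_
      rintro r ⟨g, ⟨hg0, hgf⟩, rfl⟩
      have hmem : φ (s⁻¹ • g) ∈ posSet φ f := by
        refine ⟨s⁻¹ • g, ⟨?_, ?_⟩, rfl⟩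
        · intro x; simpa using mul_nonneg (inv_nonneg.2 hs.le) (hg0 x)
        · intro x
          have hx : g x ≤ s * f x := hgf x
          show s⁻¹ * g x ≤ f x
          rw [inv_mul_le_iff₀ hs]
          exact hx
      have := le_csSup (bddAbove_posSet hbd hc f) hmem
      rw [hsmul] at this
      calc φ g = s * (s⁻¹ * φ g) := by field_simp
        _ ≤ s * pp φ f := by
            apply mul_le_mul_of_nonneg_left _ hs.le
            exact this
    refine le_antisymm (key t ht f hf) ?_
    have h2 := key t⁻¹ (by positivity) (t • f) (by intro x; simpa using mul_nonneg ht.le (hf x))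
    rw [inv_smul_smul₀ ht.ne' f] at h2
    calc t * pp φ f ≤ t * (t⁻¹ * pp φ (t • f)) := mul_le_mul_of_nonneg_left h2 ht.le
      _ = pp φ (t • f) := by field_simp

end pp
section psi
variable (φ : C(X,ℝ) → ℝ)

noncomputable def psi (f : C(X,ℝ)) : ℝ := pp φ (f + ‖f‖ • 1) - pp φ (‖f‖ • 1)

variable {φ c}
variable (hadd : ∀ f g, φ (f+g) = φ f + φ g)
  (hsmul : ∀ (t : ℝ) f, φ (t • f) = t * φ f)
  (hbd : ∀ f, |φ f| ≤ c * ‖f‖) (hc : 0 ≤ c)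

lemma nonneg_smul_one {a : ℝ} (ha : 0 ≤ a) : (0:C(X,ℝ)) ≤ a • (1:C(X,ℝ)) := fun x => by
  show (0:C(X,ℝ)) x ≤ (a • (1:C(X,ℝ))) x
  simp [ha]

lemma f_add_norm_nonneg (f : C(X,ℝ)) : 0 ≤ f + ‖f‖ • 1 := fun x => by
  show (0:C(X,ℝ)) x ≤ (f + ‖f‖ • (1:C(X,ℝ))) x
  have := f.norm_coe_le_norm x
  rw [Real.norm_eq_abs] at this
  simp only [ContinuousMap.zero_apply, ContinuousMap.add_apply, ContinuousMap.smul_apply,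
    ContinuousMap.one_apply, smul_eq_mul, mul_one]
  cases abs_le.1 this with
  | intro h1 h2 => linarith

include hadd hsmul hbd hc in
lemma psi_eq {f : C(X,ℝ)} {a : ℝ} (ha : 0 ≤ a) (haf : 0 ≤ f + a • 1) :
    psi φ f = pp φ (f + a • 1) - pp φ (a • 1) := by
  have key : ∀ a b : ℝ, 0 ≤ a → a ≤ b → 0 ≤ f + a • 1 →
      pp φ (f + b • 1) - pp φ (b • 1) = pp φ (f + a • 1) - pp φ (a • 1) := by
    intro a b ha hab haf
    have hba : (0:ℝ) ≤ b - a := sub_nonneg.2 hab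
    have h1 : f + b • 1 = (f + a • 1) + (b - a) • 1 := by
      ext x
      simp only [ContinuousMap.add_apply, ContinuousMap.smul_apply, ContinuousMap.one_apply,
        smul_eq_mul, mul_one]
      ring
    have h2 : b • (1:C(X,ℝ)) = a • 1 + (b - a) • 1 := by
      ext x
      simp only [ContinuousMap.add_apply, ContinuousMap.smul_apply, ContinuousMap.one_apply,
        smul_eq_mul, mul_one]
      ring
    rw [h1, pp_add hadd hsmul hbd hc haf (nonneg_smul_one hba), h2,
      pp_add hadd hsmul hbd hc (nonneg_smul_one ha) (nonneg_smul_one hba)]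
    ring
  show pp φ (f + ‖f‖ • 1) - pp φ (‖f‖ • 1) = _
  rcases le_total a ‖f‖ with h | h
  · exact key a ‖f‖ ha h haf
  · exact (key ‖f‖ a (norm_nonneg f) h (f_add_norm_nonneg f)).symm

include hadd hsmul hbd hc in
lemma psi_add (f g : C(X,ℝ)) : psi φ (f + g) = psi φ f + psi φ g := by
  have hb : (0:ℝ) ≤ ‖f‖ + ‖g‖ := by positivity
  have hsplit : (f + g) + (‖f‖ + ‖g‖) • (1:C(X,ℝ)) = (f + ‖f‖ • 1) + (g + ‖g‖ • 1) := by
    ext x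
    simp only [ContinuousMap.add_apply, ContinuousMap.smul_apply, ContinuousMap.one_apply,
      smul_eq_mul, mul_one]
    ring
  have hnn : 0 ≤ (f + g) + (‖f‖ + ‖g‖) • (1:C(X,ℝ)) := by
    rw [hsplit]
    intro x
    show (0:C(X,ℝ)) x ≤ _
    have h1 := f_add_norm_nonneg f x
    have h2 := f_add_norm_nonneg g x
    simp only [ContinuousMap.zero_apply, ContinuousMap.add_apply] at h1 h2 ⊢
    have h1' : (0:ℝ) ≤ (f + ‖f‖ • (1:C(X,ℝ))) x := h1
    have h2' : (0:ℝ) ≤ (g + ‖g‖ • (1:C(X,ℝ))) x := h2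
    show (0:ℝ) ≤ (f + ‖f‖ • (1:C(X,ℝ))) x + (g + ‖g‖ • (1:C(X,ℝ))) x
    linarith
  have hone : (‖f‖ + ‖g‖) • (1:C(X,ℝ)) = ‖f‖ • 1 + ‖g‖ • 1 := by
    ext x
    simp only [ContinuousMap.add_apply, ContinuousMap.smul_apply, ContinuousMap.one_apply,
      smul_eq_mul, mul_one]
  rw [psi_eq hadd hsmul hbd hc hb hnn, hsplit,
    pp_add hadd hsmul hbd hc (f_add_norm_nonneg f) (f_add_norm_nonneg g), hone,
    pp_add hadd hsmul hbd hc (nonneg_smul_one (norm_nonneg f)) (nonneg_smul_one (norm_nonneg g))]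
  show _ = (pp φ (f + ‖f‖ • 1) - pp φ (‖f‖ • 1)) + (pp φ (g + ‖g‖ • 1) - pp φ (‖g‖ • 1))
  ring

include hadd hsmul hbd hc in
lemma psi_smul {t : ℝ} (ht : 0 ≤ t) (f : C(X,ℝ)) : psi φ (t • f) = t * psi φ f := by
  have h1 : t • f + (t * ‖f‖) • (1:C(X,ℝ)) = t • (f + ‖f‖ • 1) := by
    ext x
    simp only [ContinuousMap.add_apply, ContinuousMap.smul_apply, ContinuousMap.one_apply,
      smul_eq_mul, mul_one]
    ring
  have h2 : (t * ‖f‖) • (1:C(X,ℝ)) = t • (‖f‖ • 1) := by rw [smul_smul]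
  have hnn : 0 ≤ t • f + (t * ‖f‖) • (1:C(X,ℝ)) := by
    rw [h1]
    intro x
    show (0:C(X,ℝ)) x ≤ (t • (f + ‖f‖ • (1:C(X,ℝ)))) x
    have h3 : (0:ℝ) ≤ (f + ‖f‖ • (1:C(X,ℝ))) x := f_add_norm_nonneg f x
    show (0:ℝ) ≤ t * (f + ‖f‖ • (1:C(X,ℝ))) x
    positivity
  rw [psi_eq hadd hsmul hbd hc (by positivity) hnn, h1, h2,
    pp_smul hadd hsmul hbd hc ht (f_add_norm_nonneg f),
    pp_smul hadd hsmul hbd hc ht (nonneg_smul_one (norm_nonneg f))]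
  show _ = t * (pp φ (f + ‖f‖ • 1) - pp φ (‖f‖ • 1))
  ring

include hsmul hbd hc in
lemma pp_zero : pp φ (0:C(X,ℝ)) = 0 := by
  refine le_antisymm ?_ (pp_nonneg hsmul hbd hc (le_refl _))
  refine csSup_le ((posSet φ 0).nonempty_of_mem (zero_mem_posSet hsmul (le_refl _))) ?_
  rintro r ⟨g, ⟨hg0, hgf⟩, rfl⟩
  have : g = 0 := le_antisymm hgf hg0
  rw [this, phi_zero hsmul]

include hadd hsmul hbd hc in
lemma psi_of_nonneg {f : C(X,ℝ)} (hf : 0 ≤ f) : psi φ f = pp φ f := by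
  have := psi_eq hadd hsmul hbd hc (le_refl (0:ℝ)) (f := f) (by simpa using hf)
  simpa [pp_zero hsmul hbd hc] using this

include hadd hsmul hbd hc in
lemma psi_nonneg {f : C(X,ℝ)} (hf : 0 ≤ f) : 0 ≤ psi φ f := by
  rw [psi_of_nonneg hadd hsmul hbd hc hf]; exact pp_nonneg hsmul hbd hc hf

include hadd hsmul hbd hc in
lemma phi_le_psi {f : C(X,ℝ)} (hf : 0 ≤ f) : φ f ≤ psi φ f := by
  rw [psi_of_nonneg hadd hsmul hbd hc hf]; exact le_pp hsmul hbd hc hf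

include hadd hsmul hbd hc in
lemma two_psi_one_sub_le : 2 * psi φ 1 - φ 1 ≤ c := by
  have h1 : (0:C(X,ℝ)) ≤ 1 := fun x => by
    show (0:C(X,ℝ)) x ≤ (1:C(X,ℝ)) x; simp
  rw [psi_of_nonneg hadd hsmul hbd hc h1]
  have : pp φ 1 ≤ (c + φ 1) / 2 := by
    refine csSup_le ((posSet φ 1).nonempty_of_mem (zero_mem_posSet hsmul h1)) ?_
    rintro r ⟨g, ⟨hg0, hg1⟩, rfl⟩
    have hkey : φ ((2:ℝ) • g - 1) = 2 * φ g - φ 1 := by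
      have : (2:ℝ) • g = ((2:ℝ) • g - 1) + 1 := by abel
      have h2 := hsmul 2 g
      rw [this, hadd] at h2
      linarith
    have hnorm : ‖(2:ℝ) • g - 1‖ ≤ 1 := by
      refine (ContinuousMap.norm_le _ zero_le_one).2 fun x => ?_
      have ha : (0:ℝ) ≤ g x := hg0 x
      have hb : g x ≤ 1 := by simpa using hg1 x
      show ‖((2:ℝ) • g - 1) x‖ ≤ 1
      simp only [ContinuousMap.sub_apply, ContinuousMap.smul_apply, ContinuousMap.one_apply,
        smul_eq_mul, Real.norm_eq_abs]
      rw [abs_le]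
      constructor <;> linarith
    have := (abs_le.1 (hbd ((2:ℝ) • g - 1))).2
    have hle : φ ((2:ℝ) • g - 1) ≤ c := le_trans this (by nlinarith)
    rw [hkey] at hle
    linarith
  linarith

end psi

section content
variable [T2Space X]

/-- Admissible functions for a set `K`: nonneg continuous functions ≥ 1 on K. -/
def adm (K : Set X) : Set C(X,ℝ) := {f | 0 ≤ f ∧ ∀ x ∈ K, 1 ≤ f x}

noncomputable def rinf (ψ : C(X,ℝ) → ℝ) (K : Set X) : ℝ := sInf (ψ '' adm K)

variable {ψ : C(X,ℝ) → ℝ}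
variable (hadd : ∀ f g, ψ (f+g) = ψ f + ψ g)
  (hmul : ∀ t : ℝ, 0 ≤ t → ∀ f, ψ (t • f) = t * ψ f)
  (hpos : ∀ f : C(X,ℝ), 0 ≤ f → 0 ≤ ψ f)

include hmul in
lemma psi_zero' : ψ 0 = 0 := by simpa using hmul 0 le_rfl 0

include hadd hpos in
lemma psi_mono' {f g : C(X,ℝ)} (h : f ≤ g) : ψ f ≤ ψ g := by
  have h1 : g = f + (g - f) := by abel
  have h2 : (0:C(X,ℝ)) ≤ g - f := fun x => by
    have h3 : f x ≤ g x := h x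
    show (0:ℝ) ≤ g x - f x
    linarith
  calc ψ f ≤ ψ f + ψ (g - f) := by linarith [hpos _ h2]
    _ = ψ g := by rw [← hadd, ← h1]

lemma one_mem_adm (K : Set X) : (1:C(X,ℝ)) ∈ adm K := by
  constructor
  · intro x; show (0:ℝ) ≤ (1:C(X,ℝ)) x; simp
  · intro x _; show (1:ℝ) ≤ (1:C(X,ℝ)) x; simp

include hpos in
lemma bddBelow_adm (K : Set X) : BddBelow (ψ '' adm K) :=
  ⟨0, by rintro r ⟨f, hf, rfl⟩; exact hpos f hf.1⟩

lemma adm_image_nonempty (K : Set X) : (ψ '' adm K).Nonempty := ⟨ψ 1, 1, one_mem_adm K, rfl⟩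

include hpos in
lemma rinf_le {K : Set X} {f : C(X,ℝ)} (hf : f ∈ adm K) : rinf ψ K ≤ ψ f :=
  csInf_le (bddBelow_adm hpos K) ⟨f, hf, rfl⟩

lemma le_rinf {K : Set X} {r : ℝ} (h : ∀ f ∈ adm K, r ≤ ψ f) : r ≤ rinf ψ K := by
  refine le_csInf (adm_image_nonempty K) ?_
  rintro s ⟨f, hf, rfl⟩
  exact h f hf

include hpos in
lemma rinf_nonneg (K : Set X) : 0 ≤ rinf ψ K :=
  le_rinf fun f hf => hpos f hf.1

include hpos in
lemma rinf_mono {K₁ K₂ : Set X} (h : K₁ ⊆ K₂) : rinf ψ K₁ ≤ rinf ψ K₂ :=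
  le_rinf fun f hf => rinf_le hpos ⟨hf.1, fun x hx => hf.2 x (h hx)⟩

include hadd hpos in
lemma rinf_union_le (K₁ K₂ : Set X) : rinf ψ (K₁ ∪ K₂) ≤ rinf ψ K₁ + rinf ψ K₂ := by
  have key : ∀ f₁ ∈ adm K₁, ∀ f₂ ∈ adm K₂, rinf ψ (K₁ ∪ K₂) ≤ ψ f₁ + ψ f₂ := by
    intro f₁ h₁ f₂ h₂
    have hmem : f₁ + f₂ ∈ adm (K₁ ∪ K₂) := by
      constructor
      · intro x
        have a1 : (0:ℝ) ≤ f₁ x := h₁.1 x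
        have a2 : (0:ℝ) ≤ f₂ x := h₂.1 x
        show (0:ℝ) ≤ f₁ x + f₂ x
        linarith
      · rintro x (hx | hx)
        · have a1 : (1:ℝ) ≤ f₁ x := h₁.2 x hx
          have a2 : (0:ℝ) ≤ f₂ x := h₂.1 x
          show (1:ℝ) ≤ f₁ x + f₂ x
          linarith
        · have a1 : (0:ℝ) ≤ f₁ x := h₁.1 x
          have a2 : (1:ℝ) ≤ f₂ x := h₂.2 x hx
          show (1:ℝ) ≤ f₁ x + f₂ x
          linarith
    calc rinf ψ (K₁ ∪ K₂) ≤ ψ (f₁ + f₂) := rinf_le hpos hmem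
      _ = ψ f₁ + ψ f₂ := hadd _ _
  have h1 : rinf ψ (K₁ ∪ K₂) - rinf ψ K₂ ≤ rinf ψ K₁ := by
    refine le_rinf fun f₁ h₁ => ?_
    have h2 : rinf ψ (K₁ ∪ K₂) - ψ f₁ ≤ rinf ψ K₂ :=
      le_rinf fun f₂ h₂ => by have := key f₁ h₁ f₂ h₂; linarith
    linarith
  linarith

include hadd hmul hpos in
lemma rinf_union_eq {K₁ K₂ : Set X} (hK₁ : IsCompact K₁) (hK₂ : IsCompact K₂)
    (hd : Disjoint K₁ K₂) : rinf ψ (K₁ ∪ K₂) = rinf ψ K₁ + rinf ψ K₂ := by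
  refine le_antisymm (rinf_union_le hadd hpos K₁ K₂) ?_
  obtain ⟨g, hg0, hg1, hgI⟩ :=
    exists_continuous_zero_one_of_isClosed hK₁.isClosed hK₂.isClosed hd
  refine le_rinf fun f hf => ?_
  set f₁ : C(X,ℝ) := f * (1 - g) with hf₁def
  set f₂ : C(X,ℝ) := f * g with hf₂def
  have hfx : ∀ x, (0:ℝ) ≤ f x := fun x => hf.1 x
  have hm₁ : f₁ ∈ adm K₁ := by
    constructor
    · intro x
      show (0:ℝ) ≤ f x * ((1:C(X,ℝ)) x - g x)
      have hI := (hgI x).2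
      simp only [ContinuousMap.one_apply]
      nlinarith [hfx x]
    · intro x hx
      show (1:ℝ) ≤ f x * ((1:C(X,ℝ)) x - g x)
      have h0 : g x = 0 := hg0 hx
      have h1 : (1:ℝ) ≤ f x := hf.2 x (Or.inl hx)
      simp only [ContinuousMap.one_apply, h0]
      simpa using h1
  have hm₂ : f₂ ∈ adm K₂ := by
    constructor
    · intro x
      show (0:ℝ) ≤ f x * g x
      nlinarith [hfx x, (hgI x).1]
    · intro x hx
      show (1:ℝ) ≤ f x * g x
      have h1 : g x = 1 := hg1 hx
      have h2 : (1:ℝ) ≤ f x := hf.2 x (Or.inr hx)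
      simp only [h1, mul_one]
      exact h2
  have hsum : f₁ + f₂ = f := by
    ext x
    show f x * ((1:C(X,ℝ)) x - g x) + f x * g x = f x
    simp only [ContinuousMap.one_apply]
    ring
  have e1 := rinf_le hpos hm₁
  have e2 := rinf_le hpos hm₂
  have e3 : ψ f₁ + ψ f₂ = ψ f := by rw [← hadd, hsum]
  linarith

/-- The Riesz content associated to a positive linear functional. -/
noncomputable def rieszCont (hadd : ∀ f g, ψ (f+g) = ψ f + ψ g)
    (hmul : ∀ t : ℝ, 0 ≤ t → ∀ f, ψ (t • f) = t * ψ f)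
    (hpos : ∀ f : C(X,ℝ), 0 ≤ f → 0 ≤ ψ f) : Content X where
  toFun K := (rinf ψ (K : Set X)).toNNReal
  mono' K₁ K₂ h := Real.toNNReal_mono (rinf_mono hpos h)
  sup_disjoint' K₁ K₂ hd _ _ := by
    have h : rinf ψ ((K₁ ⊔ K₂ : TopologicalSpace.Compacts X) : Set X)
        = rinf ψ (K₁ : Set X) + rinf ψ (K₂ : Set X) := by
      rw [TopologicalSpace.Compacts.coe_sup]
      exact rinf_union_eq hadd hmul hpos K₁.2 K₂.2 hd
    show (rinf ψ ((K₁ ⊔ K₂ : TopologicalSpace.Compacts X) : Set X)).toNNReal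
        = (rinf ψ (K₁ : Set X)).toNNReal + (rinf ψ (K₂ : Set X)).toNNReal
    rw [h, Real.toNNReal_add (rinf_nonneg hpos _) (rinf_nonneg hpos _)]
  sup_le' K₁ K₂ := by
    show (rinf ψ ((K₁ ⊔ K₂ : TopologicalSpace.Compacts X) : Set X)).toNNReal
        ≤ (rinf ψ (K₁ : Set X)).toNNReal + (rinf ψ (K₂ : Set X)).toNNReal
    rw [← Real.toNNReal_add (rinf_nonneg hpos _) (rinf_nonneg hpos _)]
    refine Real.toNNReal_mono ?_
    rw [TopologicalSpace.Compacts.coe_sup]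
    exact rinf_union_le hadd hpos _ _

end content

lemma cm_integrable [MeasurableSpace X] [BorelSpace X] (μ : Measure X) [IsFiniteMeasure μ]
    (f : C(X,ℝ)) : Integrable f μ :=
  f.continuous.integrable_of_hasCompactSupport
    (isCompact_univ.of_isClosed_subset (isClosed_tsupport _) (Set.subset_univ _))

section measure
variable [T2Space X] [MeasurableSpace X] [BorelSpace X]
variable {ψ : C(X,ℝ) → ℝ}
variable (hadd : ∀ f g, ψ (f+g) = ψ f + ψ g)
  (hmul : ∀ t : ℝ, 0 ≤ t → ∀ f, ψ (t • f) = t * ψ f)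
  (hpos : ∀ f : C(X,ℝ), 0 ≤ f → 0 ≤ ψ f)

noncomputable def rieszMeas (hadd : ∀ f g, ψ (f+g) = ψ f + ψ g)
    (hmul : ∀ t : ℝ, 0 ≤ t → ∀ f, ψ (t • f) = t * ψ f)
    (hpos : ∀ f : C(X,ℝ), 0 ≤ f → 0 ≤ ψ f) : Measure X :=
  (rieszCont hadd hmul hpos).measure

lemma rieszMeas_regular : (rieszMeas hadd hmul hpos).Regular := by
  rw [rieszMeas]; infer_instance

lemma rieszMeas_open {U : Set X} (hU : IsOpen U) :
    rieszMeas hadd hmul hpos U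
      = ⨆ (K : TopologicalSpace.Compacts X) (_ : (K : Set X) ⊆ U),
          ENNReal.ofReal (rinf ψ (K : Set X)) := by
  rw [rieszMeas, Content.measure_apply _ hU.measurableSet,
    Content.outerMeasure_of_isOpen _ U hU]
  rfl

include hadd hmul hpos in
lemma rieszMeas_compact_le {K : Set X} (hKc : IsCompact K) {f : C(X,ℝ)} (hf0 : 0 ≤ f)
    (hf1 : ∀ x ∈ K, 1 ≤ f x) :
    rieszMeas hadd hmul hpos K ≤ ENNReal.ofReal (ψ f) := by
  have hψf : 0 ≤ ψ f := hpos f hf0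
  refine ENNReal.le_of_forall_pos_le_add fun ε hε _ => ?_
  set δ : ℝ := (ε : ℝ) with hδ
  have hδ0 : 0 < δ := hε
  set e : ℝ := δ / (ψ f + 2*δ) with he
  have hfd : 0 < ψ f + 2*δ := by linarith
  have he0 : 0 < e := div_pos hδ0 hfd
  have he1 : e < 1 := (div_lt_one hfd).2 (by linarith)
  have h1e : 0 < 1 - e := by linarith
  have hkey : (1 - e)⁻¹ * ψ f ≤ ψ f + δ := by
    rw [inv_mul_le_iff₀ h1e]
    have h1me : 1 - e = (ψ f + δ)/(ψ f + 2*δ) := by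
      rw [he]; field_simp; ring
    rw [h1me, div_mul_eq_mul_div, le_div_iff₀ hfd]
    nlinarith [sq_nonneg δ]
  set U : Set X := f ⁻¹' (Set.Ioi (1 - e)) with hUdef
  have hU : IsOpen U := isOpen_Ioi.preimage f.continuous
  have hKU : K ⊆ U := fun x hx => by
    have := hf1 x hx
    show f x ∈ Set.Ioi (1 - e)
    simp only [Set.mem_Ioi]
    linarith
  have step1 : rieszMeas hadd hmul hpos K ≤ rieszMeas hadd hmul hpos U := measure_mono hKU
  have step2 : rieszMeas hadd hmul hpos U ≤ ENNReal.ofReal ((1 - e)⁻¹ * ψ f) := by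
    rw [rieszMeas_open hadd hmul hpos hU]
    refine iSup₂_le fun K' hK' => ?_
    refine ENNReal.ofReal_le_ofReal ?_
    have hmem : (1 - e)⁻¹ • f ∈ adm (K' : Set X) := by
      constructor
      · intro x
        have : (0:ℝ) ≤ f x := hf0 x
        show (0:ℝ) ≤ (1 - e)⁻¹ * f x
        positivity
      · intro x hx
        have hfx : f x ∈ Set.Ioi (1 - e) := hK' hx
        simp only [Set.mem_Ioi] at hfx
        show (1:ℝ) ≤ (1 - e)⁻¹ * f x
        rw [le_inv_mul_iff₀ h1e, mul_one]
        exact hfx.le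
    calc rinf ψ (K' : Set X) ≤ ψ ((1 - e)⁻¹ • f) := rinf_le hpos hmem
      _ = (1 - e)⁻¹ * ψ f := hmul _ (by positivity) f
  calc rieszMeas hadd hmul hpos K ≤ ENNReal.ofReal ((1 - e)⁻¹ * ψ f) := step1.trans step2
    _ ≤ ENNReal.ofReal (ψ f + δ) := ENNReal.ofReal_le_ofReal hkey
    _ = ENNReal.ofReal (ψ f) + ENNReal.ofReal δ := ENNReal.ofReal_add hψf hδ0.le
    _ = ENNReal.ofReal (ψ f) + ε := by rw [hδ, ENNReal.ofReal_coe_nnreal]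

include hadd hpos in
lemma le_rieszMeas_open {B U : Set X} (hB : IsClosed B) (hU : IsOpen U) (hBU : B ⊆ U)
    {f : C(X,ℝ)} (hf0 : 0 ≤ f) (hf1 : f ≤ 1) (hsupp : ∀ x, f x ≠ 0 → x ∈ B) :
    ENNReal.ofReal (ψ f) ≤ rieszMeas hadd hmul hpos U := by
  have h1 : ψ f ≤ rinf ψ B := by
    refine le_rinf fun f' hf' => ?_
    refine psi_mono' hadd hpos fun x => ?_
    by_cases hx : f x = 0
    · have : (0:ℝ) ≤ f' x := hf'.1 x
      show f x ≤ f' x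
      rw [hx]; exact this
    · have : (1:ℝ) ≤ f' x := hf'.2 x (hsupp x hx)
      have h2 : f x ≤ (1:C(X,ℝ)) x := hf1 x
      show f x ≤ f' x
      simp only [ContinuousMap.one_apply] at h2
      linarith
  calc ENNReal.ofReal (ψ f) ≤ ENNReal.ofReal (rinf ψ B) := ENNReal.ofReal_le_ofReal h1
    _ ≤ rieszMeas hadd hmul hpos U := by
        rw [rieszMeas_open hadd hmul hpos hU]
        exact le_iSup₂_of_le ⟨B, hB.isCompact⟩ hBU (le_refl _)

include hadd hmul hpos in
lemma rieszMeas_univ : rieszMeas hadd hmul hpos Set.univ = ENNReal.ofReal (ψ 1) := by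
  refine le_antisymm ?_ ?_
  · rw [rieszMeas_open hadd hmul hpos isOpen_univ]
    refine iSup₂_le fun K' _ => ?_
    exact ENNReal.ofReal_le_ofReal (rinf_le hpos (one_mem_adm _))
  · refine le_rieszMeas_open hadd hmul hpos isClosed_univ isOpen_univ (le_refl _)
      ?_ (le_refl _) (fun x _ => Set.mem_univ x)
    intro x; show (0:ℝ) ≤ (1:C(X,ℝ)) x; simp

include hadd hmul hpos in
lemma rieszMeas_finite : IsFiniteMeasure (rieszMeas hadd hmul hpos) :=
  ⟨by rw [rieszMeas_univ hadd hmul hpos]; exact ENNReal.ofReal_lt_top⟩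

end measure

lemma slice_sum {h : ℝ} (hh : 0 < h) {t : ℝ} (ht : 0 ≤ t) (N : ℕ) :
    ∑ i ∈ Finset.range N, min (max (t - i*h) 0) h = min t (N*h) := by
  induction N with
  | zero =>
    simp only [Finset.range_zero, Finset.sum_empty, Nat.cast_zero, zero_mul]
    rw [min_eq_right ht]
  | succ n ih =>
    rw [Finset.sum_range_succ, ih]
    push_cast
    rcases le_total t (n*h) with hc | hc
    · have h1 : t - n*h ≤ 0 := by linarith
      rw [max_eq_right h1, min_eq_left hh.le, min_eq_left hc, min_eq_left (by nlinarith), add_zero]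
    · have h1 : max (t - n*h) 0 = t - n*h := max_eq_left (by linarith)
      rw [min_eq_right hc, h1]
      rcases le_total (t - n*h) h with hc2 | hc2
      · rw [min_eq_left hc2, min_eq_left (by nlinarith)]
        ring
      · rw [min_eq_right hc2, min_eq_right (by nlinarith)]
        ring

section integral
variable [T2Space X] [MeasurableSpace X] [BorelSpace X]
variable {ψ : C(X,ℝ) → ℝ}
variable (hadd : ∀ f g, ψ (f+g) = ψ f + ψ g)
  (hmul : ∀ t : ℝ, 0 ≤ t → ∀ f, ψ (t • f) = t * ψ f)
  (hpos : ∀ f : C(X,ℝ), 0 ≤ f → 0 ≤ ψ f)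

include hadd hmul in
lemma psi_map_sum {ι : Type*} (s : Finset ι) (g : ι → C(X,ℝ)) :
    ψ (∑ i ∈ s, g i) = ∑ i ∈ s, ψ (g i) := by
  classical
  induction s using Finset.induction_on with
  | empty => simpa using psi_zero' hmul
  | insert a s hne ih =>
                     rw [Finset.sum_insert hne, Finset.sum_insert hne, hadd, ih]

include hadd hmul hpos in
lemma psi_le_integral {f : C(X,ℝ)} (hf : 0 ≤ f) :
    haveI := rieszMeas_finite hadd hmul hpos
    ψ f ≤ ∫ x, f x ∂(rieszMeas hadd hmul hpos) := by
  haveI := rieszMeas_finite hadd hmul hpos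
  set μ := rieszMeas hadd hmul hpos with hμdef
  set T : ℝ := (μ Set.univ).toReal with hT
  have hT0 : 0 ≤ T := ENNReal.toReal_nonneg
  -- main estimate for every h > 0
  have main : ∀ h : ℝ, 0 < h → ψ f ≤ (∫ x, f x ∂μ) + 2*h*T := by
    intro h hh
    obtain ⟨m, hm⟩ := exists_nat_ge (‖f‖ / h)
    set N : ℕ := m + 2 with hN
    have hNf : ‖f‖ ≤ N * h := by
      rw [div_le_iff₀ hh] at hm
      have : (m:ℝ) ≤ N := by rw [hN]; push_cast; linarith
      nlinarith
    -- the slices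
    set g : ℕ → C(X,ℝ) := fun i => ((f - ((i:ℝ)*h) • 1) ⊔ 0) ⊓ (h • 1) with hg
    have gval : ∀ i x, g i x = min (max (f x - i*h) 0) h := by
      intro i x
      show min (max ((f x - (i:ℝ)*h * (1:ℝ))) ((0:C(X,ℝ)) x)) (h * 1) = _
      simp
    have g0 : ∀ i, 0 ≤ g i := fun i x => by
      show (0:ℝ) ≤ g i x
      rw [gval i x]
      exact le_min (le_max_right _ _) hh.le
    have gh : ∀ i x, g i x ≤ h := fun i x => by
      rw [gval i x]; exact min_le_right _ _
    have hsumg : ∑ i ∈ Finset.range N, g i = f := by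
      ext x
      rw [ContinuousMap.coe_sum, Finset.sum_apply]
      have hfx : 0 ≤ f x := hf x
      calc ∑ i ∈ Finset.range N, g i x = ∑ i ∈ Finset.range N, min (max (f x - i*h) 0) h := by
            refine Finset.sum_congr rfl fun i _ => gval i x
        _ = min (f x) (N*h) := slice_sum hh hfx N
        _ = f x := by
              have hb := f.norm_coe_le_norm x
              rw [Real.norm_eq_abs] at hb
              exact min_eq_left ((le_abs_self _).trans (hb.trans hNf))
    -- upper bound for each slice : ψ (g i) ≤ h * (μ (V i)).toReal
    set V : ℕ → Set X := fun i => f ⁻¹' (Set.Ioi ((i:ℝ)*h - h)) with hV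
    set Kc : ℕ → Set X := fun i => f ⁻¹' (Set.Ici ((i:ℝ)*h)) with hK
    have hVopen : ∀ i, IsOpen (V i) := fun i => isOpen_Ioi.preimage f.continuous
    have hKclosed : ∀ i, IsClosed (Kc i) := fun i => isClosed_Ici.preimage f.continuous
    have hKV : ∀ i, Kc i ⊆ V i := fun i x hx => by
      have : (i:ℝ)*h ≤ f x := hx
      show f x ∈ Set.Ioi ((i:ℝ)*h - h)
      simp only [Set.mem_Ioi]
      linarith
    have hVK : ∀ i, V (i+1) ⊆ Kc i := fun i x hx => by
      have : (i+1:ℕ)*h - h < f x := hx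
      show (i:ℝ)*h ≤ f x
      push_cast at this
      nlinarith
    have slice_up : ∀ i, ψ (g i) ≤ h * (μ (V i)).toReal := by
      intro i
      have hu0 : 0 ≤ h⁻¹ • g i := fun x => by
        have := g0 i x
        show (0:ℝ) ≤ h⁻¹ * g i x
        have h2 : (0:ℝ) ≤ g i x := this
        positivity
      have hu1 : h⁻¹ • g i ≤ 1 := fun x => by
        show h⁻¹ * g i x ≤ (1:ℝ)
        rw [inv_mul_le_iff₀ hh, mul_one]
        exact gh i x
      have hsupp : ∀ x, (h⁻¹ • g i) x ≠ 0 → x ∈ Kc i := by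
        intro x hx
        have hgx : g i x ≠ 0 := by
          intro h0
          apply hx
          show h⁻¹ * g i x = 0
          rw [h0, mul_zero]
        rw [gval i x] at hgx
        have : max (f x - i*h) 0 ≠ 0 := by
          intro h0; apply hgx; rw [h0]; exact min_eq_left hh.le
        have h1 : 0 < f x - i*h := by
          by_contra hcon
          push_neg at hcon
          exact this (max_eq_right hcon)
        show (i:ℝ)*h ≤ f x
        linarith
      have := le_rieszMeas_open (ψ := ψ) hadd hmul hpos (hKclosed i) (hVopen i) (hKV i)
        hu0 hu1 hsupp
      have hμV : μ (V i) ≠ ⊤ := measure_ne_top μ _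
      have h2 : ψ (h⁻¹ • g i) ≤ (μ (V i)).toReal :=
        (ENNReal.ofReal_le_iff_le_toReal hμV).1 this
      have h3 : ψ (h⁻¹ • g i) = h⁻¹ * ψ (g i) := hmul _ (by positivity) _
      rw [h3] at h2
      calc ψ (g i) = h * (h⁻¹ * ψ (g i)) := by field_simp
        _ ≤ h * (μ (V i)).toReal := by
            exact mul_le_mul_of_nonneg_left h2 hh.le
    -- lower bound for each slice : h * (μ (Kc (i+1))).toReal ≤ ∫ g i
    have slice_down : ∀ i, h * (μ (Kc (i+1))).toReal ≤ ∫ x, g i x ∂μ := by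
      intro i
      have hKm : MeasurableSet (Kc (i+1)) := (hKclosed (i+1)).measurableSet
      have hint : Integrable (g i) μ := cm_integrable μ (g i)
      have h1 : ∀ x ∈ Kc (i+1), h ≤ g i x := by
        intro x hx
        have hfx : ((i:ℝ)+1)*h ≤ f x := by
          have : ((i+1:ℕ):ℝ)*h ≤ f x := hx
          push_cast at this
          linarith
        rw [gval i x]
        have : h ≤ f x - i*h := by nlinarith
        rw [max_eq_left (by linarith)]
        exact le_min this (le_refl h)
      calc h * (μ (Kc (i+1))).toReal ≤ ∫ x in Kc (i+1), g i x ∂μ := by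
            have := MeasureTheory.setIntegral_ge_of_const_le hKm (measure_ne_top μ _) h1
              (hint.integrableOn)
            rw [smul_eq_mul, mul_comm] at this; exact this
        _ ≤ ∫ x, g i x ∂μ := by
            refine MeasureTheory.setIntegral_le_integral hint ?_
            filter_upwards with x
            exact g0 i x
    -- integral positivity of slices
    have int_nonneg : ∀ i, 0 ≤ ∫ x, g i x ∂μ := fun i =>
      integral_nonneg fun x => g0 i x
    -- chain: ψ (g (i+2)) ≤ ∫ g i
    have chain : ∀ i, ψ (g (i+2)) ≤ ∫ x, g i x ∂μ := by
      intro i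
      refine (slice_up (i+2)).trans (le_trans ?_ (slice_down i))
      have : μ (V (i+2)) ≤ μ (Kc (i+1)) := measure_mono (hVK (i+1))
      have h2 : (μ (V (i+2))).toReal ≤ (μ (Kc (i+1))).toReal :=
        ENNReal.toReal_mono (measure_ne_top μ _) this
      exact mul_le_mul_of_nonneg_left h2 hh.le
    have bound_T : ∀ i, ψ (g i) ≤ h * T := by
      intro i
      refine (slice_up i).trans ?_
      have : (μ (V i)).toReal ≤ T := by
        rw [hT]
        exact ENNReal.toReal_mono (measure_ne_top μ _) (measure_mono (Set.subset_univ _))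
      exact mul_le_mul_of_nonneg_left this hh.le
    -- put it together
    have hψf : ψ f = ∑ i ∈ Finset.range N, ψ (g i) := by
      rw [← psi_map_sum hadd hmul, hsumg]
    have hintf : ∫ x, f x ∂μ = ∑ i ∈ Finset.range N, ∫ x, g i x ∂μ := by
      rw [← MeasureTheory.integral_finset_sum _ (fun i _ => cm_integrable μ (g i))]
      have : ∀ x, f x = ∑ i ∈ Finset.range N, g i x := by
        intro x
        rw [← hsumg, ContinuousMap.coe_sum, Finset.sum_apply]
      exact integral_congr_ae (Filter.Eventually.of_forall this)
    have splitsum : ∑ i ∈ Finset.range N, ψ (g i)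
        = ψ (g 0) + ψ (g 1) + ∑ i ∈ Finset.range m, ψ (g (i+2)) := by
      rw [hN, Finset.sum_range_succ', Finset.sum_range_succ']
      have hgg : ∀ i : ℕ, g (i + 1 + 1) = g (i + 2) := fun i => by norm_num
      simp only [hgg]
      ring
    rw [hψf, splitsum, hintf]
    have hb0 := bound_T 0
    have hb1 := bound_T 1
    have hs1 : ∑ i ∈ Finset.range m, ψ (g (i+2)) ≤ ∑ i ∈ Finset.range m, ∫ x, g i x ∂μ :=
      Finset.sum_le_sum fun i _ => chain i
    have hs2 : ∑ i ∈ Finset.range m, (∫ x, g i x ∂μ) ≤ ∑ i ∈ Finset.range N, ∫ x, g i x ∂μ :=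
      Finset.sum_le_sum_of_subset_of_nonneg (Finset.range_subset_range.2 (by omega))
        (fun i _ _ => int_nonneg i)
    linarith
  -- conclude by letting h → 0
  by_contra hcon
  push_neg at hcon
  set δ := ψ f - ∫ x, f x ∂μ with hδ
  have hδ0 : 0 < δ := by rw [hδ]; linarith
  have := main (δ / (4*(T+1))) (by positivity)
  have h2 : 2*(δ / (4*(T+1)))*T < δ := by
    rw [mul_div_assoc', div_mul_eq_mul_div, div_lt_iff₀ (by positivity)]
    nlinarith
  rw [hδ] at h2
  linarith

end integral

section integral2
variable [T2Space X] [MeasurableSpace X] [BorelSpace X]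
variable {ψ : C(X,ℝ) → ℝ}
variable (hadd : ∀ f g, ψ (f+g) = ψ f + ψ g)
  (hmul : ∀ t : ℝ, 0 ≤ t → ∀ f, ψ (t • f) = t * ψ f)
  (hpos : ∀ f : C(X,ℝ), 0 ≤ f → 0 ≤ ψ f)

include hadd hmul hpos in
theorem integral_rieszMeas (f : C(X,ℝ)) :
    ∫ x, f x ∂(rieszMeas hadd hmul hpos) = ψ f := by
  haveI := rieszMeas_finite hadd hmul hpos
  set μ := rieszMeas hadd hmul hpos with hμdef
  have hone : (0:C(X,ℝ)) ≤ 1 := fun x => by show (0:ℝ) ≤ (1:C(X,ℝ)) x; simp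
  have hμr : (μ Set.univ).toReal = ψ 1 := by
    rw [hμdef, rieszMeas_univ hadd hmul hpos, ENNReal.toReal_ofReal (hpos 1 hone)]
  have intconst : ∀ a : ℝ, ∫ x, (a • (1:C(X,ℝ))) x ∂μ = a * (μ Set.univ).toReal := by
    intro a
    have : ∀ x, (a • (1:C(X,ℝ))) x = a := fun x => by
      show a * (1:C(X,ℝ)) x = a; simp
    rw [integral_congr_ae (Filter.Eventually.of_forall this), integral_const, smul_eq_mul, measureReal_def]
    ring
  have nonneg_case : ∀ f : C(X,ℝ), 0 ≤ f → ∫ x, f x ∂μ = ψ f := by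
    intro f hf
    have le1 : ψ f ≤ ∫ x, f x ∂μ := psi_le_integral hadd hmul hpos hf
    set f' : C(X,ℝ) := ‖f‖ • 1 - f with hf'def
    have hf'0 : 0 ≤ f' := fun x => by
      have hb := f.norm_coe_le_norm x
      rw [Real.norm_eq_abs] at hb
      show (0:ℝ) ≤ ‖f‖ * (1:C(X,ℝ)) x - f x
      simp only [ContinuousMap.one_apply, mul_one]
      have := (abs_le.1 hb).2
      linarith
    have le2 : ψ f' ≤ ∫ x, f' x ∂μ := psi_le_integral hadd hmul hpos hf'0
    have hsplit2 : f' + f = ‖f‖ • 1 := by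
      rw [hf'def]; abel
    have hψf' : ψ f' + ψ f = ‖f‖ * ψ 1 := by
      rw [← hadd, hsplit2, hmul _ (norm_nonneg f)]
    have hintf' : ∫ x, f' x ∂μ = ‖f‖ * (μ Set.univ).toReal - ∫ x, f x ∂μ := by
      have heq : ∀ x, f' x = (‖f‖ • (1:C(X,ℝ))) x - f x := fun x => rfl
      rw [integral_congr_ae (Filter.Eventually.of_forall heq),
        integral_sub ((cm_integrable μ (‖f‖ • 1))) (cm_integrable μ f), intconst]
    rw [hintf'] at le2
    have hx : ‖f‖ * (μ Set.univ).toReal = ‖f‖ * ψ 1 := by rw [hμr]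
    linarith [le1, le2, hψf']
  set f₀ : C(X,ℝ) := f + ‖f‖ • 1 with hf₀
  have h1 : ∫ x, f₀ x ∂μ = ψ f₀ := nonneg_case f₀ (f_add_norm_nonneg f)
  have h2 : ψ f₀ = ψ f + ‖f‖ * ψ 1 := by
    rw [hf₀, hadd, hmul _ (norm_nonneg f)]
  have h3 : ∫ x, f₀ x ∂μ = (∫ x, f x ∂μ) + ‖f‖ * (μ Set.univ).toReal := by
    have heq : ∀ x, f₀ x = f x + (‖f‖ • (1:C(X,ℝ))) x := fun x => rfl
    rw [integral_congr_ae (Filter.Eventually.of_forall heq),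
      integral_add (cm_integrable μ f) (cm_integrable μ (‖f‖ • 1)), intconst]
  rw [hμr] at h3
  linarith

end integral2

/-- A measure dominated by a finite regular measure is `PaperRegular`. -/
lemma paperRegular_of_le [T2Space X] [MeasurableSpace X] [BorelSpace X]
    {μ' μ : Measure X} [IsFiniteMeasure μ] (hreg : μ.Regular)
    (hle : ∀ A : Set X, MeasurableSet A → μ' A ≤ μ A) : PaperRegular μ' := by
  intro A hA
  refine le_antisymm ?_ ?_
  swap
  · refine iSup₂_le fun B hB => ?_
    exact measure_mono hB.2.2.2
  · refine ENNReal.le_of_forall_pos_le_add fun ε hε _ => ?_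
    haveI : μ.InnerRegularCompactLTTop := by infer_instance
    obtain ⟨K, hKA, hKc, hK⟩ := hA.exists_isCompact_lt_add (measure_ne_top μ A)
      ((by exact_mod_cast hε.ne' : ((ε:ℝ≥0∞)) ≠ 0))
    have hKcl : IsClosed K := hKc.isClosed
    have hKm : MeasurableSet K := hKcl.measurableSet
    have hdiff : μ' (A \ K) ≤ (ε:ℝ≥0∞) := by
      refine (hle _ (hA.diff hKm)).trans ?_
      rw [measure_diff hKA hKm.nullMeasurableSet (measure_ne_top μ K)]
      exact tsub_le_iff_left.2 hK.le
    have hsup : μ' K ≤ ⨆ B ∈ {B : Set X | MeasurableSet B ∧ IsClosed B ∧ IsCompact B ∧ B ⊆ A},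
        μ' B := le_iSup₂_of_le K ⟨hKm, hKcl, hKc, hKA⟩ (le_refl _)
    calc μ' A = μ' (K ∪ A \ K) := by rw [Set.union_diff_cancel hKA]
      _ ≤ μ' K + μ' (A \ K) := measure_union_le _ _
      _ ≤ _ + (ε:ℝ≥0∞) := add_le_add hsup hdiff

section rep
variable [T2Space X] [MeasurableSpace X] [BorelSpace X]

theorem exists_rep (φ : C(X,ℝ) → ℝ) {c : ℝ}
    (hadd : ∀ f g, φ (f+g) = φ f + φ g) (hsmul : ∀ (t:ℝ) f, φ (t • f) = t * φ f)
    (hbd : ∀ f, |φ f| ≤ c * ‖f‖) (hc : 0 ≤ c) :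
    ∃ ν : SignedMeasure X, SignedRegular ν ∧
      ν.totalVariation Set.univ ≤ ENNReal.ofReal c ∧
      ∀ f : C(X,ℝ), smIntegral ν ⇑f = φ f := by
  classical
  set ψp : C(X,ℝ) → ℝ := psi φ with hψpdef
  have hψp_add : ∀ f g, ψp (f+g) = ψp f + ψp g := fun f g => psi_add hadd hsmul hbd hc f g
  have hψp_mul : ∀ t : ℝ, 0 ≤ t → ∀ f, ψp (t • f) = t * ψp f :=
    fun t ht f => psi_smul hadd hsmul hbd hc ht f
  have hψp_pos : ∀ f : C(X,ℝ), 0 ≤ f → 0 ≤ ψp f := fun f hf => psi_nonneg hadd hsmul hbd hc hf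
  set ψm : C(X,ℝ) → ℝ := fun f => psi φ f - φ f with hψmdef
  have hψm_add : ∀ f g, ψm (f+g) = ψm f + ψm g := fun f g => by
    simp only [hψmdef]
    rw [psi_add hadd hsmul hbd hc, hadd]
    ring
  have hψm_mul : ∀ t : ℝ, 0 ≤ t → ∀ f, ψm (t • f) = t * ψm f := fun t ht f => by
    simp only [hψmdef]
    rw [psi_smul hadd hsmul hbd hc ht, hsmul]
    ring
  have hψm_pos : ∀ f : C(X,ℝ), 0 ≤ f → 0 ≤ ψm f := fun f hf =>
    sub_nonneg.2 (phi_le_psi hadd hsmul hbd hc hf)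
  set μp : Measure X := rieszMeas hψp_add hψp_mul hψp_pos with hμpdef
  set μm : Measure X := rieszMeas hψm_add hψm_mul hψm_pos with hμmdef
  haveI hfinp : IsFiniteMeasure μp := rieszMeas_finite hψp_add hψp_mul hψp_pos
  haveI hfinm : IsFiniteMeasure μm := rieszMeas_finite hψm_add hψm_mul hψm_pos
  set ν : SignedMeasure X := μp.toSignedMeasure - μm.toSignedMeasure with hνdef
  set p : Measure X := ν.toJordanDecomposition.posPart with hpdef
  set n : Measure X := ν.toJordanDecomposition.negPart with hndef
  have hνeq : p.toSignedMeasure - n.toSignedMeasure = ν :=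
    ν.toSignedMeasure_toJordanDecomposition
  have happly : ∀ A : Set X, MeasurableSet A →
      (p A).toReal + (μm A).toReal = (n A).toReal + (μp A).toReal := by
    intro A hA
    have h1 : (p.toSignedMeasure - n.toSignedMeasure) A = ν A := by rw [hνeq]
    rw [VectorMeasure.sub_apply, Measure.toSignedMeasure_apply_measurable hA,
      Measure.toSignedMeasure_apply_measurable hA, measureReal_def, measureReal_def] at h1
    have h2 : ν A = (μp A).toReal - (μm A).toReal := by
      rw [hνdef, VectorMeasure.sub_apply, Measure.toSignedMeasure_apply_measurable hA,
        Measure.toSignedMeasure_apply_measurable hA, measureReal_def, measureReal_def]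
    rw [h2] at h1
    linarith
  have hmeas : p + μm = n + μp := by
    refine Measure.ext fun A hA => ?_
    rw [Measure.add_apply, Measure.add_apply]
    have h := happly A hA
    rw [← ENNReal.toReal_add (measure_ne_top p A) (measure_ne_top μm A),
      ← ENNReal.toReal_add (measure_ne_top n A) (measure_ne_top μp A)] at h
    exact (ENNReal.toReal_eq_toReal_iff' (by finiteness) (by finiteness)).1 h
  have hintp : ∀ f : C(X,ℝ), ∫ x, f x ∂μp = ψp f :=
    fun f => integral_rieszMeas hψp_add hψp_mul hψp_pos f
  have hintm : ∀ f : C(X,ℝ), ∫ x, f x ∂μm = ψm f :=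
    fun f => integral_rieszMeas hψm_add hψm_mul hψm_pos f
  have hint : ∀ f : C(X,ℝ),
      (∫ x, f x ∂p) + ∫ x, f x ∂μm = (∫ x, f x ∂n) + ∫ x, f x ∂μp := by
    intro f
    rw [← integral_add_measure (cm_integrable p f) (cm_integrable μm f), hmeas,
      integral_add_measure (cm_integrable n f) (cm_integrable μp f)]
  have hrep : ∀ f : C(X,ℝ), smIntegral ν ⇑f = φ f := by
    intro f
    show (∫ x, f x ∂ν.toJordanDecomposition.posPart)
      - (∫ x, f x ∂ν.toJordanDecomposition.negPart) = φ f
    have h := hint f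
    rw [hintp, hintm] at h
    have : ψm f = ψp f - φ f := by simp [hψmdef, hψpdef]
    rw [← hpdef, ← hndef]
    linarith
  obtain ⟨S, hSm, hpS, hnS⟩ := ν.toJordanDecomposition.mutuallySingular
  have ple : ∀ A : Set X, MeasurableSet A → p A ≤ μp A := by
    intro A hA
    have h1 : p A ≤ p (A ∩ S) + p (A \ S) := measure_le_inter_add_diff p A S
    have h2 : p (A ∩ S) = 0 := le_antisymm ((measure_mono Set.inter_subset_right).trans hpS.le)
      zero_le
    have h3 : n (A \ S) = 0 := le_antisymm
      ((measure_mono (Set.diff_subset_iff.2 (by simp [Set.union_comm]))).trans hnS.le)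
      zero_le
    have h4 : p (A \ S) + μm (A \ S) = n (A \ S) + μp (A \ S) := by
      have := congrArg (fun m => m (A \ S)) hmeas
      simpa [Measure.add_apply] using this
    rw [h3, zero_add] at h4
    have h5 : p (A \ S) ≤ μp (A \ S) := by
      calc p (A \ S) ≤ p (A \ S) + μm (A \ S) := le_self_add
        _ = μp (A \ S) := h4
    calc p A ≤ p (A ∩ S) + p (A \ S) := h1
      _ = p (A \ S) := by rw [h2, zero_add]
      _ ≤ μp (A \ S) := h5
      _ ≤ μp A := measure_mono Set.diff_subset
  have nle : ∀ A : Set X, MeasurableSet A → n A ≤ μm A := by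
    intro A hA
    have h1 : n A ≤ n (A ∩ S) + n (A \ S) := measure_le_inter_add_diff n A S
    have h3 : n (A \ S) = 0 := le_antisymm
      ((measure_mono (Set.diff_subset_iff.2 (by simp [Set.union_comm]))).trans hnS.le)
      zero_le
    have h2 : p (A ∩ S) = 0 := le_antisymm ((measure_mono Set.inter_subset_right).trans hpS.le)
      zero_le
    have h4 : p (A ∩ S) + μm (A ∩ S) = n (A ∩ S) + μp (A ∩ S) := by
      have := congrArg (fun m => m (A ∩ S)) hmeas
      simpa [Measure.add_apply] using this
    rw [h2, zero_add] at h4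
    have h5 : n (A ∩ S) ≤ μm (A ∩ S) := by
      calc n (A ∩ S) ≤ n (A ∩ S) + μp (A ∩ S) := le_self_add
        _ = μm (A ∩ S) := h4.symm
    calc n A ≤ n (A ∩ S) + n (A \ S) := h1
      _ = n (A ∩ S) := by rw [h3, add_zero]
      _ ≤ μm (A ∩ S) := h5
      _ ≤ μm A := measure_mono Set.inter_subset_left
  have hregp : PaperRegular p :=
    paperRegular_of_le (rieszMeas_regular hψp_add hψp_mul hψp_pos) ple
  have hregn : PaperRegular n :=
    paperRegular_of_le (rieszMeas_regular hψm_add hψm_mul hψm_pos) nle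
  have hone : (0:C(X,ℝ)) ≤ 1 := fun x => by show (0:ℝ) ≤ (1:C(X,ℝ)) x; simp
  have htv : ν.totalVariation Set.univ ≤ ENNReal.ofReal c := by
    have h0 : ν.totalVariation Set.univ = p Set.univ + n Set.univ := by
      show (ν.toJordanDecomposition.posPart + ν.toJordanDecomposition.negPart) Set.univ = _
      rw [Measure.add_apply]
    have hb : ψp 1 + ψm 1 ≤ c := by
      have := two_psi_one_sub_le hadd hsmul hbd hc
      have he : ψp 1 + ψm 1 = 2 * psi φ 1 - φ 1 := by simp [hψpdef, hψmdef]; ring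
      linarith
    calc ν.totalVariation Set.univ = p Set.univ + n Set.univ := h0
      _ ≤ μp Set.univ + μm Set.univ :=
          add_le_add (ple _ MeasurableSet.univ) (nle _ MeasurableSet.univ)
      _ = ENNReal.ofReal (ψp 1) + ENNReal.ofReal (ψm 1) := by
          rw [hμpdef, hμmdef, rieszMeas_univ hψp_add hψp_mul hψp_pos,
            rieszMeas_univ hψm_add hψm_mul hψm_pos]
      _ = ENNReal.ofReal (ψp 1 + ψm 1) := by
          rw [ENNReal.ofReal_add (hψp_pos 1 hone) (hψm_pos 1 hone)]
      _ ≤ ENNReal.ofReal c := ENNReal.ofReal_le_ofReal hb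
  exact ⟨ν, ⟨hregp, hregn⟩, htv, hrep⟩

end rep

section smi
variable [MeasurableSpace X] [BorelSpace X]

lemma smIntegral_cm_add (ν : SignedMeasure X) (f g : C(X,ℝ)) :
    smIntegral ν ⇑(f + g) = smIntegral ν ⇑f + smIntegral ν ⇑g := by
  have key : ∀ μ : Measure X, IsFiniteMeasure μ →
      ∫ x, (f+g) x ∂μ = (∫ x, f x ∂μ) + ∫ x, g x ∂μ := by
    intro μ hμ
    have h : ∀ x, (f+g) x = f x + g x := fun x => rfl
    rw [integral_congr_ae (Filter.Eventually.of_forall h),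
      integral_add (cm_integrable μ f) (cm_integrable μ g)]
  simp only [smIntegral]
  rw [key _ inferInstance, key _ inferInstance]
  ring

lemma smIntegral_cm_smul (ν : SignedMeasure X) (t : ℝ) (f : C(X,ℝ)) :
    smIntegral ν ⇑(t • f) = t * smIntegral ν ⇑f := by
  have key : ∀ μ : Measure X, ∫ x, (t • f) x ∂μ = t * ∫ x, f x ∂μ := by
    intro μ
    have h : ∀ x, (t • f) x = t * f x := fun x => rfl
    rw [integral_congr_ae (Filter.Eventually.of_forall h), integral_const_mul]
  simp only [smIntegral]
  rw [key, key]
  ring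

lemma abs_smIntegral_le (ν : SignedMeasure X) (f : C(X,ℝ)) :
    |smIntegral ν ⇑f| ≤ ‖f‖ * (ν.totalVariation Set.univ).toReal := by
  set p : Measure X := ν.toJordanDecomposition.posPart with hp
  set n : Measure X := ν.toJordanDecomposition.negPart with hn
  have key : ∀ μ : Measure X, IsFiniteMeasure μ →
      |∫ x, f x ∂μ| ≤ ‖f‖ * (μ Set.univ).toReal := by
    intro μ hμ
    have h1 : |∫ x, f x ∂μ| ≤ ∫ x, |f x| ∂μ := by
      have := norm_integral_le_integral_norm (μ := μ) (fun x => f x)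
      simpa [Real.norm_eq_abs] using this
    have h2 : ∫ x, |f x| ∂μ ≤ ∫ _x, ‖f‖ ∂μ := by
      refine integral_mono (cm_integrable μ f).abs (integrable_const _) fun x => ?_
      have := f.norm_coe_le_norm x
      rwa [Real.norm_eq_abs] at this
    have h3 : ∫ _x, ‖f‖ ∂μ = (μ Set.univ).toReal * ‖f‖ := by
      rw [integral_const, smul_eq_mul, measureReal_def]
    rw [h3] at h2
    calc |∫ x, f x ∂μ| ≤ (μ Set.univ).toReal * ‖f‖ := h1.trans h2
      _ = ‖f‖ * (μ Set.univ).toReal := mul_comm _ _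
  have htv : (ν.totalVariation Set.univ).toReal = (p Set.univ).toReal + (n Set.univ).toReal := by
    show (((ν.toJordanDecomposition.posPart + ν.toJordanDecomposition.negPart))
      Set.univ).toReal = _
    rw [Measure.add_apply, ENNReal.toReal_add (measure_ne_top _ _) (measure_ne_top _ _)]
  have h4 := key p inferInstance
  have h5 := key n inferInstance
  have h6 : |smIntegral ν ⇑f| ≤ |∫ x, f x ∂p| + |∫ x, f x ∂n| := abs_sub _ _
  rw [htv]
  calc |smIntegral ν ⇑f| ≤ |∫ x, f x ∂p| + |∫ x, f x ∂n| := h6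
    _ ≤ ‖f‖ * (p Set.univ).toReal + ‖f‖ * (n Set.univ).toReal := add_le_add h4 h5
    _ = ‖f‖ * ((p Set.univ).toReal + (n Set.univ).toReal) := by ring

end smi
end S15

/-- Lemma 3.2: for every y ∈ ℓ¹, the set A_y = {ν ∈ V : ‖ν_n‖_tv ≤ |y_n|} is
σ(V, U)-compact. -/
theorem stmt15 (y : ℕ → ℝ) (hy : Summable fun n => |y n|) :
    @IsCompact (Vseq H) (weakTopV H)
      {ν : Vseq H | ∀ n, (ν.1 n).totalVariation Set.univ ≤ ENNReal.ofReal |y n|} := by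
  classical
  letI : TopologicalSpace (Vseq H) := weakTopV H
  set A : Set (Vseq H) :=
    {ν : Vseq H | ∀ n, (ν.1 n).totalVariation Set.univ ≤ ENNReal.ofReal |y n|} with hAdef
  rw [isCompact_iff_ultrafilter_le_nhds]
  intro F hF
  have hAF : A ∈ F := le_principal_iff.1 hF
  set e : ∀ n, C(H n, ℝ) → Vseq H → ℝ := fun n f ν => smIntegral (ν.1 n) ⇑f with he
  -- bound on A
  have ebound : ∀ n (f : C(H n, ℝ)), ∀ ν ∈ A, |e n f ν| ≤ |y n| * ‖f‖ := by
    intro n f ν hν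
    have h1 := S15.abs_smIntegral_le (ν.1 n) f
    have h2 : (((ν.1 n).totalVariation Set.univ)).toReal ≤ |y n| := by
      have h3 := ENNReal.toReal_mono (ENNReal.ofReal_ne_top) (hν n)
      rwa [ENNReal.toReal_ofReal (abs_nonneg _)] at h3
    calc |e n f ν| ≤ ‖f‖ * ((ν.1 n).totalVariation Set.univ).toReal := h1
      _ ≤ ‖f‖ * |y n| := mul_le_mul_of_nonneg_left h2 (norm_nonneg f)
      _ = |y n| * ‖f‖ := mul_comm _ _
  -- ultrafilter limits
  have hlim : ∀ n (f : C(H n, ℝ)), ∃ x : ℝ, |x| ≤ |y n| * ‖f‖ ∧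
      Tendsto (e n f) ↑F (𝓝 x) := by
    intro n f
    have hmem : (e n f) ⁻¹' (Set.Icc (-(|y n| * ‖f‖)) (|y n| * ‖f‖)) ∈ F := by
      filter_upwards [hAF] with ν hν
      have := abs_le.1 (ebound n f ν hν)
      exact ⟨this.1, this.2⟩
    have hmem2 : ↑(F.map (e n f)) ≤ 𝓟 (Set.Icc (-(|y n| * ‖f‖)) (|y n| * ‖f‖)) := by
      rw [Ultrafilter.coe_map]
      exact le_principal_iff.2 (Filter.mem_map.2 hmem)
    obtain ⟨x, hxI, hxle⟩ := isCompact_Icc.ultrafilter_le_nhds (F.map (e n f)) hmem2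
    refine ⟨x, abs_le.2 ⟨hxI.1, hxI.2⟩, ?_⟩
    have : Filter.map (e n f) ↑F ≤ 𝓝 x := by rw [← Ultrafilter.coe_map]; exact hxle
    exact this
  choose L hLbd hLtd using hlim
  -- linearity of the limits
  have hLadd : ∀ n (f g : C(H n,ℝ)), L n (f + g) = L n f + L n g := by
    intro n f g
    have h1 : Tendsto (e n (f+g)) ↑F (𝓝 (L n f + L n g)) := by
      have heq : e n (f+g) = fun ν => e n f ν + e n g ν := by
        funext ν; exact S15.smIntegral_cm_add (ν.1 n) f g
      rw [heq]
      exact (hLtd n f).add (hLtd n g)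
    exact tendsto_nhds_unique (hLtd n (f+g)) h1
  have hLsmul : ∀ n (t : ℝ) (f : C(H n,ℝ)), L n (t • f) = t * L n f := by
    intro n t f
    have h1 : Tendsto (e n (t • f)) ↑F (𝓝 (t * L n f)) := by
      have heq : e n (t • f) = fun ν => t * e n f ν := by
        funext ν; exact S15.smIntegral_cm_smul (ν.1 n) t f
      rw [heq]
      exact (hLtd n f).const_mul t
    exact tendsto_nhds_unique (hLtd n (t • f)) h1
  -- representation of each limit functional by a regular signed measure
  have hrepn : ∀ n, ∃ ρ : SignedMeasure (H n), SignedRegular ρ ∧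
      ρ.totalVariation Set.univ ≤ ENNReal.ofReal |y n| ∧
      ∀ f : C(H n, ℝ), smIntegral ρ ⇑f = L n f := by
    intro n
    refine S15.exists_rep (L n) (hLadd n) (fun t f => hLsmul n t f) ?_ (abs_nonneg (y n))
    intro f
    exact hLbd n f
  choose ρ hρreg hρtv hρint using hrepn
  have hsum : (∑' n, (ρ n).totalVariation Set.univ) < ⊤ := by
    calc ∑' n, (ρ n).totalVariation Set.univ ≤ ∑' n, ENNReal.ofReal |y n| :=
        ENNReal.tsum_le_tsum hρtv
      _ = ENNReal.ofReal (∑' n, |y n|) :=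
        (ENNReal.ofReal_tsum_of_nonneg (fun n => abs_nonneg _) hy).symm
      _ < ⊤ := ENNReal.ofReal_lt_top
  set ν₀ : Vseq H := ⟨ρ, hρreg, hsum⟩ with hν₀def
  have hν₀A : ν₀ ∈ A := fun n => hρtv n
  refine ⟨ν₀, hν₀A, ?_⟩
  -- convergence in the weak topology
  have hnhds : (𝓝 ν₀ : Filter (Vseq H)) =
      Filter.comap (fun ν : Vseq H => fun u : Useq H => pairUV H u ν)
        (𝓝 (fun u : Useq H => pairUV H u ν₀)) :=
    nhds_induced _ _
  rw [hnhds, ← tendsto_iff_comap, tendsto_pi_nhds]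
  intro u
  obtain ⟨M₀, hM₀⟩ := u.2
  set M : ℝ := max M₀ 0 with hMdef
  have hM : ∀ n, ‖u.1 n‖ ≤ M := fun n => (hM₀ n).trans (le_max_left _ _)
  have hM0 : 0 ≤ M := le_max_right _ _
  have hpair : ∀ ν : Vseq H, pairUV H u ν = ∑' n, e n (u.1 n) ν := fun ν => rfl
  have hsummy : Summable (fun n => M * |y n|) := hy.mul_left M
  -- summability of the coordinate pairings
  have hsumme : ∀ ν : Vseq H, Summable (fun n => e n (u.1 n) ν) := by
    intro ν
    have htv : Summable (fun n => ((ν.1 n).totalVariation Set.univ).toReal) :=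
      ENNReal.summable_toReal (ne_of_lt ν.2.2)
    refine Summable.of_norm_bounded (htv.mul_left M) fun n => ?_
    rw [Real.norm_eq_abs]
    calc |e n (u.1 n) ν| ≤ ‖u.1 n‖ * ((ν.1 n).totalVariation Set.univ).toReal :=
        S15.abs_smIntegral_le (ν.1 n) (u.1 n)
      _ ≤ M * ((ν.1 n).totalVariation Set.univ).toReal :=
        mul_le_mul_of_nonneg_right (hM n) ENNReal.toReal_nonneg
  have hLbound : ∀ n, |L n (u.1 n)| ≤ M * |y n| := by
    intro n
    calc |L n (u.1 n)| ≤ |y n| * ‖u.1 n‖ := hLbd n (u.1 n)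
      _ ≤ |y n| * M := mul_le_mul_of_nonneg_left (hM n) (abs_nonneg _)
      _ = M * |y n| := mul_comm _ _
  have hsumL : Summable (fun n => L n (u.1 n)) := by
    refine Summable.of_norm_bounded hsummy fun n => ?_
    rw [Real.norm_eq_abs]; exact hLbound n
  have heboundA : ∀ ν ∈ A, ∀ n, |e n (u.1 n) ν| ≤ M * |y n| := by
    intro ν hν n
    calc |e n (u.1 n) ν| ≤ |y n| * ‖u.1 n‖ := ebound n (u.1 n) ν hν
      _ ≤ |y n| * M := mul_le_mul_of_nonneg_left (hM n) (abs_nonneg _)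
      _ = M * |y n| := mul_comm _ _
  have hpair₀ : pairUV H u ν₀ = ∑' n, L n (u.1 n) := by
    rw [hpair ν₀]
    exact tsum_congr fun n => hρint n (u.1 n)
  rw [Metric.tendsto_nhds]
  intro ε hε
  -- choose a cut-off N with small tail
  have htail : Tendsto (fun N => ∑' n, M * |y (n + N)|) atTop (𝓝 0) :=
    tendsto_sum_nat_add (fun n => M * |y n|)
  obtain ⟨N, hN⟩ := (htail.eventually_lt_const (by positivity : (0:ℝ) < ε/4)).exists
  have htails : Summable (fun n => M * |y (n + N)|) := (summable_nat_add_iff N).2 hsummy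
  -- finite part converges
  have hfin : Tendsto (fun ν => ∑ n ∈ Finset.range N, e n (u.1 n) ν) ↑F
      (𝓝 (∑ n ∈ Finset.range N, L n (u.1 n))) :=
    tendsto_finset_sum _ fun n _ => hLtd n (u.1 n)
  have hfin2 : ∀ᶠ ν in ↑F,
      dist (∑ n ∈ Finset.range N, e n (u.1 n) ν) (∑ n ∈ Finset.range N, L n (u.1 n)) < ε/4 :=
    Metric.tendsto_nhds.1 hfin (ε/4) (by positivity)
  filter_upwards [hAF, hfin2] with ν hνA hνfin
  rw [Real.dist_eq] at hνfin ⊢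
  -- split into finite part and tails
  have hsplit1 : (∑ n ∈ Finset.range N, e n (u.1 n) ν) + ∑' n, e (n+N) (u.1 (n+N)) ν
      = pairUV H u ν := by
    rw [hpair ν]
    exact (hsumme ν).sum_add_tsum_nat_add N
  have hsplit2 : (∑ n ∈ Finset.range N, L n (u.1 n)) + ∑' n, L (n+N) (u.1 (n+N))
      = pairUV H u ν₀ := by
    rw [hpair₀]
    exact hsumL.sum_add_tsum_nat_add N
  have htail1 : |∑' n, e (n+N) (u.1 (n+N)) ν| ≤ ∑' n, M * |y (n + N)| := by
    have := tsum_of_norm_bounded htails.hasSum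
      (f := fun n => e (n+N) (u.1 (n+N)) ν) (fun n => by
        rw [Real.norm_eq_abs]; exact heboundA ν hνA (n+N))
    simpa [Real.norm_eq_abs] using this
  have htail2 : |∑' n, L (n+N) (u.1 (n+N))| ≤ ∑' n, M * |y (n + N)| := by
    have := tsum_of_norm_bounded htails.hasSum
      (f := fun n => L (n+N) (u.1 (n+N))) (fun n => by
        rw [Real.norm_eq_abs]; exact hLbound (n+N))
    simpa [Real.norm_eq_abs] using this
  have expand : pairUV H u ν - pairUV H u ν₀
      = ((∑ n ∈ Finset.range N, e n (u.1 n) ν) - ∑ n ∈ Finset.range N, L n (u.1 n))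
        + (∑' n, e (n+N) (u.1 (n+N)) ν) - ∑' n, L (n+N) (u.1 (n+N)) := by
    rw [← hsplit1, ← hsplit2]; ring
  rw [expand]
  have habs : |((∑ n ∈ Finset.range N, e n (u.1 n) ν) - ∑ n ∈ Finset.range N, L n (u.1 n))
        + (∑' n, e (n+N) (u.1 (n+N)) ν) - ∑' n, L (n+N) (u.1 (n+N))|
      ≤ |(∑ n ∈ Finset.range N, e n (u.1 n) ν) - ∑ n ∈ Finset.range N, L n (u.1 n)|
        + |∑' n, e (n+N) (u.1 (n+N)) ν| + |∑' n, L (n+N) (u.1 (n+N))| := by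
    set a := (∑ n ∈ Finset.range N, e n (u.1 n) ν) - ∑ n ∈ Finset.range N, L n (u.1 n)
    set b := ∑' n, e (n+N) (u.1 (n+N)) ν
    set c := ∑' n, L (n+N) (u.1 (n+N))
    calc |a + b - c| ≤ |a + b| + |c| := abs_sub _ _
      _ ≤ |a| + |b| + |c| := by linarith [abs_add_le a b]
  calc |((∑ n ∈ Finset.range N, e n (u.1 n) ν) - ∑ n ∈ Finset.range N, L n (u.1 n))
        + (∑' n, e (n+N) (u.1 (n+N)) ν) - ∑' n, L (n+N) (u.1 (n+N))|
      ≤ |(∑ n ∈ Finset.range N, e n (u.1 n) ν) - ∑ n ∈ Finset.range N, L n (u.1 n)|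
        + |∑' n, e (n+N) (u.1 (n+N)) ν| + |∑' n, L (n+N) (u.1 (n+N))| := habs
    _ < ε/4 + (ε/4) + (ε/4) := by
        have := htail1.trans_lt hN
        have := htail2.trans_lt hN
        linarith [hνfin]
    _ < ε := by linarith
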